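/- For every r with 1 ≤ r < ρ⁻¹ and every x ∈ Γ, one has ∑_{z∈Γ} G_r(e,z)·G_r(z,x)² ≤ 2(1−rρ)⁻²·G_r(e,x). -/

import Mathlib

open Filter MeasureTheory Set
open scoped ENNReal NNReal Topology Classical

noncomputable section

namespace BRWPaper

/-- Word length of `x` with respect to the finite generating set `S`:
the least `n` such that `x` is a product of `n` elements of `S`. -/
def wlen {Γ : Type*} [Group Γ] (S : Finset Γ) (x : Γ) : ℕ :=
  sInf {n : ℕ | ∃ f : Fin n → Γ, (∀ i, f i ∈ S) ∧ (List.ofFn f).prod = x}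

/-- Word distance `d(x,y) = |x⁻¹ y|`. -/
def wdist {Γ : Type*} [Group Γ] (S : Finset Γ) (x y : Γ) : ℕ := wlen S (x⁻¹ * y)

/-- Gromov product `(x|y)_w` with respect to the word metric. -/
def gromov {Γ : Type*} [Group Γ] (S : Finset Γ) (w x y : Γ) : ℝ :=
  ((wdist S w x : ℝ) + (wdist S w y : ℝ) - (wdist S x y : ℝ)) / 2

/-- `S` is a finite symmetric generating set of `Γ`. -/
def SymmGen {Γ : Type*} [Group Γ] (S : Finset Γ) : Prop :=
  (∀ s ∈ S, s⁻¹ ∈ S) ∧ Subgroup.closure (S : Set Γ) = ⊤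

/-- Gromov hyperbolicity of the word metric associated to `S`:
for some `δ ≥ 0`, `(x|y)_w ≥ min{(x|z)_w, (y|z)_w} − δ` for all `w,x,y,z`. -/
def IsHyperbolic {Γ : Type*} [Group Γ] (S : Finset Γ) : Prop :=
  ∃ δ : ℝ, 0 ≤ δ ∧ ∀ w x y z : Γ,
    min (gromov S w x z) (gromov S w y z) - δ ≤ gromov S w x y

/-- `Γ` is virtually `ℤ`: it contains `ℤ` as a subgroup of finite index. -/
def VirtuallyZ (Γ : Type*) [Group Γ] : Prop :=
  ∃ H : Subgroup Γ, H.index ≠ 0 ∧ Nonempty (H ≃* Multiplicative ℤ)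

/-- `Γ` is nonelementary: neither finite nor virtually `ℤ`. -/
def Nonelementary (Γ : Type*) [Group Γ] : Prop :=
  Infinite Γ ∧ ¬ VirtuallyZ Γ

/-- Cardinality of the sphere `𝕊_n` of radius `n` about the identity. -/
def sphereCard {Γ : Type*} [Group Γ] (S : Finset Γ) (n : ℕ) : ℕ :=
  Set.ncard {x : Γ | wlen S x = n}

/-- Volume entropy `v = limsup (1/n) log |𝕊_n|`. -/
def entropy {Γ : Type*} [Group Γ] (S : Finset Γ) : ℝ :=
  limsup (fun n : ℕ => Real.log (sphereCard S n) / n) atTop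

/-- Convolution powers `μ^{*n}` of a probability `μ` on `Γ`. -/
def convPow {Γ : Type*} [Group Γ] (μ : Γ → ℝ) : ℕ → Γ → ℝ
  | 0 => fun x => if x = 1 then 1 else 0
  | (n + 1) => fun x => ∑' y : Γ, convPow μ n y * μ (y⁻¹ * x)

/-- `n`-step transition probabilities `p_n(x,y) = μ^{*n}(x⁻¹y)` of the random walk
with step distribution `μ`. -/
def heatKernel {Γ : Type*} [Group Γ] (μ : Γ → ℝ) (n : ℕ) (x y : Γ) : ℝ :=
  convPow μ n (x⁻¹ * y)

/-- Spectral radius `ρ = limsup p_n(e,e)^{1/n}`. -/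
def specRad {Γ : Type*} [Group Γ] (μ : Γ → ℝ) : ℝ :=
  limsup (fun n : ℕ => (convPow μ n 1) ^ (1 / (n : ℝ))) atTop

/-- Green function `G_r(x,y) = ∑_{n ≥ 0} rⁿ p_n(x,y)`. -/
def green {Γ : Type*} [Group Γ] (μ : Γ → ℝ) (r : ℝ) (x y : Γ) : ℝ :=
  ∑' n : ℕ, r ^ n * heatKernel μ n x y

/-- `H_n(r) = ∑_{x ∈ 𝕊_n} G_r(e,x)`. -/
def Hn {Γ : Type*} [Group Γ] (S : Finset Γ) (μ : Γ → ℝ) (r : ℝ) (n : ℕ) : ℝ :=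
  ∑' x : {x : Γ // wlen S x = n}, green μ r 1 (x : Γ)

/-- `H(r) = limsup H_n(r)^{1/n}`. -/
def Hgr {Γ : Type*} [Group Γ] (S : Finset Γ) (μ : Γ → ℝ) (r : ℝ) : ℝ :=
  limsup (fun n : ℕ => (Hn S μ r n) ^ (1 / (n : ℝ))) atTop

/-- `μ` is an admissible, symmetric, superexponential probability measure on `Γ`. -/
structure IsAdmissible {Γ : Type*} [Group Γ] (S : Finset Γ) (μ : Γ → ℝ) : Prop where
  nonneg : ∀ x, 0 ≤ μ x
  total : HasSum μ 1
  symm : ∀ x, μ x⁻¹ = μ x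
  gen : Subsemigroup.closure (Function.support μ) = ⊤
  superexp : ∀ r : ℝ, 0 < r → Summable fun x => Real.exp (r * wlen S x) * μ x


set_option linter.unusedSectionVars false

section Aux

variable {Γ : Type*} [Group Γ] (μ : Γ → ℝ)

/-- `μ` as an `ℝ≥0∞`-valued measure. -/
def eta : Γ → ℝ≥0∞ := fun x => ENNReal.ofReal (μ x)

/-- convolution powers valued in `ℝ≥0∞`. -/
def nu : ℕ → Γ → ℝ≥0∞
  | 0 => fun x => if x = 1 then 1 else 0
  | (n + 1) => fun x => ∑' y : Γ, nu n y * eta μ (y⁻¹ * x)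

variable {μ}

lemma eta_sum (hnn : ∀ x, 0 ≤ μ x) (htot : HasSum μ 1) : ∑' x, eta μ x = 1 := by
  simp only [eta]
  rw [← ENNReal.ofReal_tsum_of_nonneg hnn htot.summable, htot.tsum_eq, ENNReal.ofReal_one]

lemma eta_shift (hnn : ∀ x, 0 ≤ μ x) (htot : HasSum μ 1) (y : Γ) :
    ∑' x, eta μ (y⁻¹ * x) = 1 := by
  have := (Equiv.mulLeft y).tsum_eq (fun x => eta μ (y⁻¹ * x))
  simp only [Equiv.coe_mulLeft, inv_mul_cancel_left] at this
  rw [← this, eta_sum hnn htot]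

lemma nu_sum (hnn : ∀ x, 0 ≤ μ x) (htot : HasSum μ 1) (n : ℕ) :
    ∑' x, nu μ n x = 1 := by
  induction n with
  | zero =>
      rw [show (nu μ 0) = fun x => if x = 1 then (1:ℝ≥0∞) else 0 from rfl]
      rw [tsum_eq_single 1 (fun b hb => if_neg hb)]
      simp
  | succ n ih =>
      rw [show (nu μ (n+1)) = fun x => ∑' y : Γ, nu μ n y * eta μ (y⁻¹ * x) from rfl]
      rw [ENNReal.tsum_comm]
      calc ∑' y, ∑' x, nu μ n y * eta μ (y⁻¹ * x)
          = ∑' y, nu μ n y * ∑' x, eta μ (y⁻¹ * x) := by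
            exact tsum_congr fun y => ENNReal.tsum_mul_left
        _ = ∑' y, nu μ n y := by
            refine tsum_congr fun y => ?_
            rw [eta_shift hnn htot, mul_one]
        _ = 1 := ih

lemma nu_le_one (hnn : ∀ x, 0 ≤ μ x) (htot : HasSum μ 1) (n : ℕ) (x : Γ) :
    nu μ n x ≤ 1 :=
  (ENNReal.le_tsum x).trans (nu_sum hnn htot n).le

lemma nu_ne_top (hnn : ∀ x, 0 ≤ μ x) (htot : HasSum μ 1) (n : ℕ) (x : Γ) :
    nu μ n x ≠ ∞ :=
  ((nu_le_one hnn htot n x).trans_lt ENNReal.one_lt_top).ne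

lemma convPow_eq (hnn : ∀ x, 0 ≤ μ x) (htot : HasSum μ 1) (n : ℕ) (x : Γ) :
    convPow μ n x = (nu μ n x).toReal := by
  induction n generalizing x with
  | zero =>
      by_cases h : x = 1 <;> simp [convPow, nu, h]
  | succ n ih =>
      have : ∀ y : Γ, convPow μ n y * μ (y⁻¹ * x)
          = ((nu μ n y) * eta μ (y⁻¹ * x)).toReal := by
        intro y
        rw [ih, ENNReal.toReal_mul, eta, ENNReal.toReal_ofReal (hnn _)]
      rw [show convPow μ (n+1) x = ∑' y : Γ, convPow μ n y * μ (y⁻¹ * x) from rfl]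
      rw [show nu μ (n+1) x = ∑' y : Γ, nu μ n y * eta μ (y⁻¹ * x) from rfl]
      have hfin : ∀ y : Γ, nu μ n y * eta μ (y⁻¹ * x) ≠ ∞ := fun y =>
        ENNReal.mul_ne_top (nu_ne_top hnn htot n y) ENNReal.ofReal_ne_top
      rw [ENNReal.tsum_toReal_eq hfin]
      exact tsum_congr this

lemma nu_succ (n : ℕ) (x : Γ) :
    nu μ (n+1) x = ∑' y : Γ, nu μ n y * eta μ (y⁻¹ * x) := rfl

lemma nu_zero (x : Γ) : nu μ 0 x = if x = 1 then 1 else 0 := rfl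

lemma nu_one (x : Γ) : nu μ 1 x = eta μ x := by
  rw [nu_succ]
  rw [tsum_eq_single 1 (fun b hb => by rw [nu_zero, if_neg hb, zero_mul])]
  rw [nu_zero, if_pos rfl, one_mul, inv_one, one_mul]

/-- Chapman–Kolmogorov. -/
lemma nu_mul (a b : ℕ) (x : Γ) :
    nu μ (a + b) x = ∑' z : Γ, nu μ a z * nu μ b (z⁻¹ * x) := by
  induction b generalizing x with
  | zero =>
      rw [Nat.add_zero]
      rw [tsum_eq_single x (fun z hz => by
        rw [nu_zero, if_neg (by simpa [inv_mul_eq_one] using hz), mul_zero])]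
      rw [nu_zero, if_pos (by simp), mul_one]
  | succ b ih =>
      rw [show a + (b+1) = (a+b) + 1 by ring, nu_succ]
      calc ∑' y : Γ, nu μ (a+b) y * eta μ (y⁻¹ * x)
          = ∑' y : Γ, ∑' z : Γ, nu μ a z * nu μ b (z⁻¹ * y) * eta μ (y⁻¹ * x) := by
            refine tsum_congr fun y => ?_
            rw [ih, ENNReal.tsum_mul_right]
        _ = ∑' z : Γ, ∑' y : Γ, nu μ a z * nu μ b (z⁻¹ * y) * eta μ (y⁻¹ * x) :=
            ENNReal.tsum_comm
        _ = ∑' z : Γ, nu μ a z * ∑' y : Γ, nu μ b (z⁻¹ * y) * eta μ (y⁻¹ * x) := by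
            refine tsum_congr fun z => ?_
            rw [← ENNReal.tsum_mul_left]
            exact tsum_congr fun y => by ring
        _ = ∑' z : Γ, nu μ a z * nu μ (b+1) (z⁻¹ * x) := by
            refine tsum_congr fun z => ?_
            congr 1
            rw [nu_succ]
            have := (Equiv.mulLeft z).tsum_eq
              (fun y => nu μ b (z⁻¹ * y) * eta μ (y⁻¹ * x))
            simp only [Equiv.coe_mulLeft, inv_mul_cancel_left, mul_inv_rev] at this
            rw [← this]
            exact tsum_congr fun y => by rw [mul_assoc]

lemma nu_symm (hsymm : ∀ x : Γ, μ x⁻¹ = μ x) (n : ℕ) (x : Γ) :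
    nu μ n x⁻¹ = nu μ n x := by
  have heta : ∀ y : Γ, eta μ y⁻¹ = eta μ y := fun y => by
    simp only [eta, hsymm]
  induction n generalizing x with
  | zero => simp [nu_zero, inv_eq_one]
  | succ n ih =>
      rw [nu_succ]
      have h1 : ∀ y : Γ, nu μ n y * eta μ (y⁻¹ * x⁻¹) = nu μ n y * eta μ (x * y) := by
        intro y
        congr 1
        rw [← heta (x * y)]
        congr 1
        group
      calc ∑' y : Γ, nu μ n y * eta μ (y⁻¹ * x⁻¹)
          = ∑' y : Γ, nu μ n y * eta μ (x * y) := tsum_congr h1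
        _ = ∑' y : Γ, nu μ n y⁻¹ * eta μ (x * y⁻¹) := by
            have := (Equiv.inv Γ).tsum_eq (fun y => nu μ n y * eta μ (x * y))
            simp only [Equiv.inv_apply] at this
            rw [← this]
        _ = ∑' y : Γ, nu μ n y * eta μ (x * y⁻¹) := by
            exact tsum_congr fun y => by rw [ih]
        _ = ∑' w : Γ, eta μ w * nu μ n (w⁻¹ * x) := by
            have := ((Equiv.inv Γ).trans (Equiv.mulLeft x)).tsum_eq
              (fun w => eta μ w * nu μ n (w⁻¹ * x))
            simp only [Equiv.trans_apply, Equiv.inv_apply, Equiv.coe_mulLeft] at this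
            rw [← this]
            refine tsum_congr fun y => ?_
            have h2 : (x * y⁻¹)⁻¹ * x = y := by group
            rw [h2, mul_comm]
        _ = nu μ (n+1) x := by
            have : (1:ℕ) + n = n + 1 := by ring
            rw [← this, nu_mul]
            exact tsum_congr fun w => by rw [nu_one]

lemma nu_supermul (a b : ℕ) : nu μ a 1 * nu μ b (1:Γ) ≤ nu μ (a+b) 1 := by
  rw [nu_mul a b (1:Γ)]
  have h := ENNReal.le_tsum (f := fun z : Γ => nu μ a z * nu μ b (z⁻¹ * 1)) 1
  simpa using h

lemma nu_pow_le (m k : ℕ) : (nu μ m (1:Γ))^k ≤ nu μ (m*k) 1 := by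
  induction k with
  | zero => simp [nu_zero]
  | succ k ih =>
      rw [pow_succ, Nat.mul_succ]
      exact le_trans (mul_le_mul' ih le_rfl) (nu_supermul _ _)

lemma convPow_nonneg (hnn : ∀ x, 0 ≤ μ x) (htot : HasSum μ 1) (n : ℕ) (x : Γ) :
    0 ≤ convPow μ n x := by
  rw [convPow_eq hnn htot]; exact ENNReal.toReal_nonneg

lemma convPow_le_one (hnn : ∀ x, 0 ≤ μ x) (htot : HasSum μ 1) (n : ℕ) (x : Γ) :
    convPow μ n x ≤ 1 := by
  rw [convPow_eq hnn htot]
  have := ENNReal.toReal_mono (by simp) (nu_le_one hnn htot n x)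
  simpa using this

lemma convPow_le_specRad_pow (hnn : ∀ x, 0 ≤ μ x) (htot : HasSum μ 1)
    (hρ0 : 0 < specRad μ) (m : ℕ) :
    convPow μ (2*m) 1 ≤ specRad μ ^ (2*m) := by
  rcases Nat.eq_zero_or_pos m with hm | hm
  · subst hm; simp [convPow]
  have hm0 : ((m:ℝ)) ≠ 0 := Nat.cast_ne_zero.mpr hm.ne'
  set a := convPow μ (2*m) (1:Γ) with ha
  have ha0 : 0 ≤ a := convPow_nonneg hnn htot _ _
  rcases eq_or_lt_of_le ha0 with h0 | hpos
  · rw [← h0]; positivity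
  have hak : ∀ k, a ^ k ≤ convPow μ (2*m*k) 1 := by
    intro k
    have h1 : (nu μ (2*m) (1:Γ))^k ≤ nu μ (2*m*k) 1 := nu_pow_le _ _
    have h2 := ENNReal.toReal_mono (nu_ne_top hnn htot _ _) h1
    rwa [ENNReal.toReal_pow, ← convPow_eq hnn htot, ← convPow_eq hnn htot] at h2
  have key : a ^ (((2*m : ℕ):ℝ))⁻¹ ≤ specRad μ := by
    apply Filter.le_limsup_of_frequently_le
    · rw [Filter.frequently_atTop]
      intro N
      refine ⟨2*m*(max N 1), ?_, ?_⟩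
      · calc N ≤ max N 1 := le_max_left _ _
          _ ≤ 2*m*(max N 1) := Nat.le_mul_of_pos_left _ (by positivity)
      · set k := max N 1 with hk
        have hkpos : 0 < k := lt_of_lt_of_le one_pos (le_max_right N 1)
        have hk0 : ((k:ℝ)) ≠ 0 := Nat.cast_ne_zero.mpr hkpos.ne'
        have h3 : (a^k) ^ (((2*m*k:ℕ):ℝ))⁻¹ ≤ (convPow μ (2*m*k) 1) ^ (((2*m*k:ℕ):ℝ))⁻¹ :=
          Real.rpow_le_rpow (by positivity) (hak k) (by positivity)
        have h4 : a ^ ((((2*m:ℕ)):ℝ))⁻¹ = (a^k) ^ ((((2*m*k:ℕ)):ℝ))⁻¹ := by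
          rw [← Real.rpow_natCast a k, ← Real.rpow_mul ha0]
          congr 1
          push_cast
          field_simp
        calc a ^ ((((2*m:ℕ)):ℝ))⁻¹ = (a^k) ^ ((((2*m*k:ℕ)):ℝ))⁻¹ := h4
          _ ≤ (convPow μ (2*m*k) 1) ^ (((2*m*k:ℕ):ℝ))⁻¹ := h3
          _ = (convPow μ (2*m*k) 1) ^ (1/((2*m*k:ℕ):ℝ)) := by rw [one_div]
    · apply Filter.isBoundedUnder_of
      exact ⟨1, fun n => Real.rpow_le_one (convPow_nonneg hnn htot _ _)
        (convPow_le_one hnn htot _ _) (by positivity)⟩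
  calc a = (a ^ (((2*m:ℕ):ℝ))⁻¹) ^ (2*m) := by
        rw [← Real.rpow_natCast (a ^ (((2*m:ℕ):ℝ))⁻¹) (2*m), ← Real.rpow_mul ha0,
          inv_mul_cancel₀ (by push_cast; positivity), Real.rpow_one]
    _ ≤ specRad μ ^ (2*m) := pow_le_pow_left₀ (Real.rpow_nonneg ha0 _) key _

lemma nu_le_specRad (hnn : ∀ x, 0 ≤ μ x) (htot : HasSum μ 1)
    (hsymm : ∀ x : Γ, μ x⁻¹ = μ x) (hρ0 : 0 < specRad μ) (n : ℕ) (x : Γ) :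
    nu μ n x ≤ (ENNReal.ofReal (specRad μ))^n := by
  have hsq : (nu μ n x)^2 ≤ nu μ (n+n) 1 := by
    rw [nu_mul n n (1:Γ)]
    have h := ENNReal.le_tsum (f := fun z : Γ => nu μ n z * nu μ n (z⁻¹ * 1)) x
    have h2 : nu μ n (x⁻¹ * 1) = nu μ n x := by rw [mul_one, nu_symm hsymm]
    rw [h2] at h
    simpa [sq] using h
  have h1 : nu μ (n+n) 1 ≤ ENNReal.ofReal (specRad μ ^ (2*n)) := by
    have h2 : nu μ (n+n) (1:Γ) = ENNReal.ofReal (convPow μ (2*n) 1) := by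
      rw [convPow_eq hnn htot, ENNReal.ofReal_toReal (nu_ne_top hnn htot _ _), two_mul]
    rw [h2]
    exact ENNReal.ofReal_le_ofReal (convPow_le_specRad_pow hnn htot hρ0 n)
  have h3 : ENNReal.ofReal (specRad μ ^ (2*n)) = ((ENNReal.ofReal (specRad μ))^n)^2 := by
    rw [ENNReal.ofReal_pow hρ0.le, show 2*n = n*2 by ring, pow_mul]
  by_contra hcon
  push_neg at hcon
  have hlt := ENNReal.pow_lt_pow_left (two_ne_zero) hcon
  exact absurd (hsq.trans (h1.trans_eq h3)) (not_le.mpr hlt)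

/-- Green function valued in `ℝ≥0∞`. -/
def GE (μ : Γ → ℝ) (R : ℝ≥0∞) (x : Γ) : ℝ≥0∞ := ∑' n : ℕ, R^n * nu μ n x

lemma GE_le (hnn : ∀ x, 0 ≤ μ x) (htot : HasSum μ 1) (hsymm : ∀ x : Γ, μ x⁻¹ = μ x)
    (hρ0 : 0 < specRad μ) (R : ℝ≥0∞) (x : Γ) :
    GE μ R x ≤ (1 - R * ENNReal.ofReal (specRad μ))⁻¹ := by
  rw [← ENNReal.tsum_geometric]
  refine ENNReal.tsum_le_tsum fun n => ?_
  rw [mul_pow]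
  exact mul_le_mul' le_rfl (nu_le_specRad hnn htot hsymm hρ0 n x)

lemma tsum_mul_tsum_ennreal (f g : ℕ → ℝ≥0∞) :
    (∑' b, f b) * (∑' c, g c) = ∑' b, ∑' c, f b * g c := by
  rw [← ENNReal.tsum_mul_right]
  exact tsum_congr fun b => ENNReal.tsum_mul_left.symm

def sle : Set (ℕ × ℕ) := {p | p.1 ≤ p.2}

def e1 : (ℕ × ℕ) ≃ sle where
  toFun q := ⟨(q.1, q.1 + q.2), by simp [sle]⟩
  invFun p := ((p : ℕ × ℕ).1, (p : ℕ × ℕ).2 - (p : ℕ × ℕ).1)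
  left_inv q := by cases q; simp
  right_inv p := by
    obtain ⟨⟨b, c⟩, h⟩ := p
    have hb : b ≤ c := h
    exact Subtype.ext (by simp; omega)

def e2 : (ℕ × ℕ) ≃ ↥sleᶜ where
  toFun q := ⟨(q.1 + q.2 + 1, q.2), by simp [sle]⟩
  invFun p := ((p : ℕ × ℕ).1 - (p : ℕ × ℕ).2 - 1, (p : ℕ × ℕ).2)
  left_inv q := by cases q; simp only [Prod.mk.injEq]; exact ⟨by omega, trivial⟩
  right_inv p := by
    obtain ⟨⟨b, c⟩, h⟩ := p
    have hb : ¬ b ≤ c := h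
    exact Subtype.ext (by simp; omega)

lemma pair_decomp (f : ℕ → ℕ → ℝ≥0∞) :
    ∑' p : ℕ × ℕ, f p.1 p.2
      = (∑' q : ℕ × ℕ, f q.1 (q.1 + q.2)) + ∑' q : ℕ × ℕ, f (q.1 + q.2 + 1) q.2 := by
  rw [← Summable.tsum_add_tsum_compl (s := sle) (f := fun p : ℕ × ℕ => f p.1 p.2)
    ENNReal.summable ENNReal.summable]
  congr 1
  · exact (e1.tsum_eq fun p : sle => f (p : ℕ × ℕ).1 (p : ℕ × ℕ).2).symm
  · exact (e2.tsum_eq fun p : ↥sleᶜ => f (p : ℕ × ℕ).1 (p : ℕ × ℕ).2).symm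

lemma key_inner (hnn : ∀ x, 0 ≤ μ x) (htot : HasSum μ 1) (hsymm : ∀ x : Γ, μ x⁻¹ = μ x)
    (hρ0 : 0 < specRad μ) (R : ℝ≥0∞) (a b c : ℕ) (x : Γ) :
    (∑' z : Γ, (R^a * nu μ a z) * ((R^b * nu μ b (z⁻¹*x)) * (R^c * nu μ c (z⁻¹*x))))
      ≤ (R * ENNReal.ofReal (specRad μ))^c * (R^(a+b) * nu μ (a+b) x) := by
  set ρE := ENNReal.ofReal (specRad μ)
  have h1 : ∀ z : Γ, (R^a * nu μ a z) * ((R^b * nu μ b (z⁻¹*x)) * (R^c * nu μ c (z⁻¹*x)))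
      ≤ (R * ρE)^c * (R^(a+b) * (nu μ a z * nu μ b (z⁻¹*x))) := by
    intro z
    calc (R^a * nu μ a z) * ((R^b * nu μ b (z⁻¹*x)) * (R^c * nu μ c (z⁻¹*x)))
        = (R^c * nu μ c (z⁻¹*x)) * (R^(a+b) * (nu μ a z * nu μ b (z⁻¹*x))) := by
          rw [pow_add]; ring
      _ ≤ (R^c * ρE^c) * (R^(a+b) * (nu μ a z * nu μ b (z⁻¹*x))) :=
          mul_le_mul_left (mul_le_mul_right (nu_le_specRad hnn htot hsymm hρ0 c _) _) _
      _ = (R * ρE)^c * (R^(a+b) * (nu μ a z * nu μ b (z⁻¹*x))) := by rw [mul_pow]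
  calc (∑' z : Γ, (R^a * nu μ a z) * ((R^b * nu μ b (z⁻¹*x)) * (R^c * nu μ c (z⁻¹*x))))
      ≤ ∑' z : Γ, (R * ρE)^c * (R^(a+b) * (nu μ a z * nu μ b (z⁻¹*x))) :=
        ENNReal.tsum_le_tsum h1
    _ = (R * ρE)^c * (R^(a+b) * ∑' z : Γ, nu μ a z * nu μ b (z⁻¹*x)) := by
        rw [ENNReal.tsum_mul_left, ENNReal.tsum_mul_left]
    _ = (R * ρE)^c * (R^(a+b) * nu μ (a+b) x) := by rw [← nu_mul]

lemma Bsum (R t : ℝ≥0∞) (x : Γ) :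
    (∑' a : ℕ, ∑' q : ℕ × ℕ, t^(q.1+q.2) * (R^(a+q.1) * nu μ (a+q.1) x))
      ≤ (1-t)⁻¹ * ((1-t)⁻¹ * GE μ R x) := by
  calc (∑' a : ℕ, ∑' q : ℕ × ℕ, t^(q.1+q.2) * (R^(a+q.1) * nu μ (a+q.1) x))
      = ∑' a : ℕ, ∑' b : ℕ, ∑' d : ℕ, t^(b+d) * (R^(a+b) * nu μ (a+b) x) :=
        tsum_congr fun a =>
          ENNReal.tsum_prod (f := fun b d => t^(b+d) * (R^(a+b) * nu μ (a+b) x))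
    _ = ∑' b : ℕ, ∑' a : ℕ, ∑' d : ℕ, t^(b+d) * (R^(a+b) * nu μ (a+b) x) :=
        ENNReal.tsum_comm
    _ = ∑' b : ℕ, ∑' d : ℕ, ∑' a : ℕ, t^(b+d) * (R^(a+b) * nu μ (a+b) x) :=
        tsum_congr fun b => ENNReal.tsum_comm
    _ = ∑' b : ℕ, ∑' d : ℕ, t^(b+d) * ∑' a : ℕ, R^(a+b) * nu μ (a+b) x := by
        exact tsum_congr fun b => tsum_congr fun d => ENNReal.tsum_mul_left
    _ ≤ ∑' b : ℕ, ∑' d : ℕ, t^(b+d) * GE μ R x := by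
        refine ENNReal.tsum_le_tsum fun b => ENNReal.tsum_le_tsum fun d => ?_
        refine mul_le_mul_right ?_ _
        exact ENNReal.tsum_comp_le_tsum_of_injective (add_left_injective b)
          (fun k => R^k * nu μ k x)
    _ = (∑' b : ℕ, t^b) * ((∑' d : ℕ, t^d) * GE μ R x) := by
        rw [← ENNReal.tsum_mul_right]
        refine tsum_congr fun b => ?_
        rw [← ENNReal.tsum_mul_right, ← ENNReal.tsum_mul_left]
        exact tsum_congr fun d => by rw [pow_add]; ring
    _ = (1-t)⁻¹ * ((1-t)⁻¹ * GE μ R x) := by rw [ENNReal.tsum_geometric]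

lemma main_ennreal (hnn : ∀ x, 0 ≤ μ x) (htot : HasSum μ 1) (hsymm : ∀ x : Γ, μ x⁻¹ = μ x)
    (hρ0 : 0 < specRad μ) (R : ℝ≥0∞) (x : Γ)
    (ht1 : R * ENNReal.ofReal (specRad μ) ≤ 1) :
    ∑' z : Γ, GE μ R z * (GE μ R (z⁻¹ * x))^2
      ≤ 2 * ((1 - R * ENNReal.ofReal (specRad μ))⁻¹ *
          ((1 - R * ENNReal.ofReal (specRad μ))⁻¹ * GE μ R x)) := by
  set ρE := ENNReal.ofReal (specRad μ) with hρE
  set t := R * ρE with htdef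
  set F : ℕ → ℕ → ℕ → Γ → ℝ≥0∞ := fun a b c z =>
    (R^a * nu μ a z) * ((R^b * nu μ b (z⁻¹*x)) * (R^c * nu μ c (z⁻¹*x))) with hF
  have expand : ∀ z : Γ, GE μ R z * (GE μ R (z⁻¹*x))^2
      = ∑' a : ℕ, ∑' b : ℕ, ∑' c : ℕ, F a b c z := by
    intro z
    rw [sq]
    rw [show GE μ R (z⁻¹*x) * GE μ R (z⁻¹*x)
      = ∑' b : ℕ, ∑' c : ℕ, (R^b * nu μ b (z⁻¹*x)) * (R^c * nu μ c (z⁻¹*x)) from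
      tsum_mul_tsum_ennreal _ _]
    rw [show GE μ R z = ∑' a : ℕ, R^a * nu μ a z from rfl]
    rw [← ENNReal.tsum_mul_right]
    refine tsum_congr fun a => ?_
    rw [← ENNReal.tsum_mul_left]
    refine tsum_congr fun b => ?_
    rw [← ENNReal.tsum_mul_left]
  have hsymmF : ∀ a b c z, F a b c z = F a c b z := by
    intro a b c z; simp only [hF]; ring
  calc ∑' z : Γ, GE μ R z * (GE μ R (z⁻¹*x))^2
      = ∑' z : Γ, ∑' a : ℕ, ∑' b : ℕ, ∑' c : ℕ, F a b c z := tsum_congr expand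
    _ = ∑' a : ℕ, ∑' z : Γ, ∑' b : ℕ, ∑' c : ℕ, F a b c z := ENNReal.tsum_comm
    _ = ∑' a : ℕ, ∑' b : ℕ, ∑' z : Γ, ∑' c : ℕ, F a b c z :=
        tsum_congr fun a => ENNReal.tsum_comm
    _ = ∑' a : ℕ, ∑' b : ℕ, ∑' c : ℕ, ∑' z : Γ, F a b c z :=
        tsum_congr fun a => tsum_congr fun b => ENNReal.tsum_comm
    _ = ∑' a : ℕ, ∑' p : ℕ × ℕ, ∑' z : Γ, F a p.1 p.2 z :=
        tsum_congr fun a =>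
          (ENNReal.tsum_prod (f := fun b c => ∑' z : Γ, F a b c z)).symm
    _ = ∑' a : ℕ, ((∑' q : ℕ × ℕ, ∑' z : Γ, F a q.1 (q.1+q.2) z)
          + ∑' q : ℕ × ℕ, ∑' z : Γ, F a (q.1+q.2+1) q.2 z) :=
        tsum_congr fun a => pair_decomp (fun b c => ∑' z : Γ, F a b c z)
    _ = (∑' a : ℕ, ∑' q : ℕ × ℕ, ∑' z : Γ, F a q.1 (q.1+q.2) z)
          + ∑' a : ℕ, ∑' q : ℕ × ℕ, ∑' z : Γ, F a (q.1+q.2+1) q.2 z :=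
        ENNReal.tsum_add
    _ ≤ (∑' a : ℕ, ∑' q : ℕ × ℕ, t^(q.1+q.2) * (R^(a+q.1) * nu μ (a+q.1) x))
          + ∑' a : ℕ, ∑' q : ℕ × ℕ, t^(q.1+q.2) * (R^(a+q.2) * nu μ (a+q.2) x) := by
        refine add_le_add ?_ ?_
        · refine ENNReal.tsum_le_tsum fun a => ENNReal.tsum_le_tsum fun q => ?_
          exact key_inner hnn htot hsymm hρ0 R a q.1 (q.1+q.2) x
        · refine ENNReal.tsum_le_tsum fun a => ENNReal.tsum_le_tsum fun q => ?_
          have h1 : ∑' z : Γ, F a (q.1+q.2+1) q.2 z = ∑' z : Γ, F a q.2 (q.1+q.2+1) z :=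
            tsum_congr fun z => hsymmF _ _ _ z
          rw [h1]
          refine le_trans (key_inner hnn htot hsymm hρ0 R a q.2 (q.1+q.2+1) x) ?_
          refine mul_le_mul_left ?_ _
          calc t^(q.1+q.2+1) = t^(q.1+q.2) * t := pow_succ t _
            _ ≤ t^(q.1+q.2) * 1 := mul_le_mul_right ht1 _
            _ = t^(q.1+q.2) := mul_one _
    _ ≤ ((1-t)⁻¹ * ((1-t)⁻¹ * GE μ R x)) + ((1-t)⁻¹ * ((1-t)⁻¹ * GE μ R x)) := by
        refine add_le_add (Bsum R t x) ?_
        have hswap : ∀ a : ℕ, (∑' q : ℕ × ℕ, t^(q.1+q.2) * (R^(a+q.2) * nu μ (a+q.2) x))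
            = ∑' q : ℕ × ℕ, t^(q.1+q.2) * (R^(a+q.1) * nu μ (a+q.1) x) := by
          intro a
          have := (Equiv.prodComm ℕ ℕ).tsum_eq
            (fun q : ℕ × ℕ => t^(q.1+q.2) * (R^(a+q.1) * nu μ (a+q.1) x))
          simp only [Equiv.coe_prodComm, Prod.fst_swap, Prod.snd_swap] at this
          rw [← this]
          exact tsum_congr fun q => by rw [add_comm q.2 q.1]
        rw [show (∑' a : ℕ, ∑' q : ℕ × ℕ, t^(q.1+q.2) * (R^(a+q.2) * nu μ (a+q.2) x))
          = ∑' a : ℕ, ∑' q : ℕ × ℕ, t^(q.1+q.2) * (R^(a+q.1) * nu μ (a+q.1) x) from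
          tsum_congr hswap]
        exact Bsum R t x
    _ = 2 * ((1-t)⁻¹ * ((1-t)⁻¹ * GE μ R x)) := (two_mul _).symm

end Aux

section Aux2

variable {Γ : Type*} [Group Γ] {μ : Γ → ℝ}

lemma green_eq (hnn : ∀ x, 0 ≤ μ x) (htot : HasSum μ 1) {r : ℝ} (hr : 0 ≤ r) (x y : Γ) :
    green μ r x y = (GE μ (ENNReal.ofReal r) (x⁻¹ * y)).toReal := by
  rw [green, GE]
  rw [ENNReal.tsum_toReal_eq (fun n => ENNReal.mul_ne_top
    (ENNReal.pow_ne_top ENNReal.ofReal_ne_top) (nu_ne_top hnn htot n _))]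
  refine tsum_congr fun n => ?_
  rw [heatKernel, convPow_eq hnn htot, ENNReal.toReal_mul, ENNReal.toReal_pow,
    ENNReal.toReal_ofReal hr]

theorem statement_10' {Γ : Type*} [Group Γ] (μ : Γ → ℝ)
    (hnn : ∀ x, 0 ≤ μ x) (htot : HasSum μ 1) (hsymm : ∀ x : Γ, μ x⁻¹ = μ x)
    (hρ0 : 0 < specRad μ)
    (r : ℝ) (hr1 : 1 ≤ r) (hr2 : r < (specRad μ)⁻¹) (x : Γ) :
    (∑' z : Γ, green μ r 1 z * green μ r z x ^ 2) ≤
      2 * ((1 - r * specRad μ) ^ 2)⁻¹ * green μ r 1 x := by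
  have hr0 : 0 ≤ r := le_trans zero_le_one hr1
  have hrρ0 : 0 ≤ r * specRad μ := mul_nonneg hr0 hρ0.le
  have hrρ1 : r * specRad μ < 1 := by
    have h := mul_lt_mul_of_pos_right hr2 hρ0
    rwa [inv_mul_cancel₀ hρ0.ne'] at h
  set R := ENNReal.ofReal r with hR
  set ρE := ENNReal.ofReal (specRad μ) with hρE
  have htE : R * ρE = ENNReal.ofReal (r * specRad μ) := (ENNReal.ofReal_mul hr0).symm
  have htlt : R * ρE < 1 := by rw [htE]; exact ENNReal.ofReal_lt_one.mpr hrρ1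
  have hone : (0:ℝ) < 1 - r * specRad μ := by linarith
  have hsub : (1 : ℝ≥0∞) - R * ρE = ENNReal.ofReal (1 - r * specRad μ) := by
    rw [htE, ← ENNReal.ofReal_one]
    exact (ENNReal.ofReal_sub 1 hrρ0).symm
  have hsubne : (1:ℝ≥0∞) - R * ρE ≠ 0 := by
    rw [hsub]
    exact (ENNReal.ofReal_pos.mpr hone).ne'
  have hGfin : ∀ y : Γ, GE μ R y ≠ ∞ := fun y =>
    ne_top_of_le_ne_top (ENNReal.inv_ne_top.mpr hsubne) (GE_le hnn htot hsymm hρ0 R y)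
  have hg1 : ∀ z : Γ, green μ r 1 z = (GE μ R z).toReal := fun z => by
    rw [green_eq hnn htot hr0, inv_one, one_mul]
  have hg2 : ∀ z : Γ, green μ r z x = (GE μ R (z⁻¹ * x)).toReal := fun z =>
    green_eq hnn htot hr0 z x
  calc (∑' z : Γ, green μ r 1 z * green μ r z x ^ 2)
      = ∑' z : Γ, (GE μ R z * (GE μ R (z⁻¹ * x))^2).toReal := by
        refine tsum_congr fun z => ?_
        rw [hg1 z, hg2 z, ← ENNReal.toReal_pow, ← ENNReal.toReal_mul]
    _ = (∑' z : Γ, GE μ R z * (GE μ R (z⁻¹ * x))^2).toReal :=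
        (ENNReal.tsum_toReal_eq (fun z => ENNReal.mul_ne_top (hGfin z)
          (ENNReal.pow_ne_top (hGfin _)))).symm
    _ ≤ (2 * ((1 - R * ρE)⁻¹ * ((1 - R * ρE)⁻¹ * GE μ R x))).toReal := by
        refine ENNReal.toReal_mono ?_ (main_ennreal hnn htot hsymm hρ0 R x htlt.le)
        exact ENNReal.mul_ne_top (by simp) (ENNReal.mul_ne_top
          (ENNReal.inv_ne_top.mpr hsubne) (ENNReal.mul_ne_top
          (ENNReal.inv_ne_top.mpr hsubne) (hGfin x)))
    _ = 2 * ((1 - r * specRad μ) ^ 2)⁻¹ * green μ r 1 x := by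
        rw [ENNReal.toReal_mul, ENNReal.toReal_mul, ENNReal.toReal_mul,
          ENNReal.toReal_inv, hsub, ENNReal.toReal_ofReal hone.le, ← hg1 x]
        rw [ENNReal.toReal_ofNat]
        rw [show ((1 - r * specRad μ)^2)⁻¹
          = (1 - r * specRad μ)⁻¹ * (1 - r * specRad μ)⁻¹ by
            rw [sq, mul_inv]]
        ring

end Aux2

theorem statement_10 {Γ : Type*} [Group Γ] (S : Finset Γ) (μ : Γ → ℝ)
    (hS : SymmGen S) (hhyp : IsHyperbolic S) (hne : Nonelementary Γ)
    (hμ : IsAdmissible S μ) (hρ0 : 0 < specRad μ) (hρ1 : specRad μ < 1)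
    (r : ℝ) (hr1 : 1 ≤ r) (hr2 : r < (specRad μ)⁻¹) (x : Γ) :
    (∑' z : Γ, green μ r 1 z * green μ r z x ^ 2) ≤
      2 * ((1 - r * specRad μ) ^ 2)⁻¹ * green μ r 1 x := by
  obtain ⟨hnn, htot, hsymm, -, -⟩ := hμ
  exact statement_10' μ hnn htot hsymm hρ0 r hr1 hr2 x

end BRWPaper
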